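/- For every β ∈ [1,2) and every (c,b) ∈ C(β), the supremum sup_{α ∈ A(c,b)} P(c,α) is attained: there exists α ∈ A(c,b) such that P(c,α) = sup_{α' ∈ A(c,b)} P(c,α'). -/

import Mathlib

/-- The binary entropy function, `h(p) = p log₂(1/p) + (1-p) log₂(1/(1-p))`,
with the convention `h(0) = h(1) = 0` (automatic since `1/0 = 0` and `logb 2 0 = 0`). -/
noncomputable def binH (p : ℝ) : ℝ :=
  p * Real.logb 2 (1 / p) + (1 - p) * Real.logb 2 (1 / (1 - p))

/-- `(c, b) ∈ C(β)`: `c : ℕ → [0,1]`, `∑ cᵢ/2ⁱ = 1/(β·2ᵇ)` and `∑ cᵢ ≤ 1`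
(the latter expressed via partial sums, which is equivalent for nonnegative terms). -/
def memC (β : ℝ) (c : ℕ → ℝ) (b : ℕ) : Prop :=
  (∀ i, c i ∈ Set.Icc (0 : ℝ) 1) ∧
  (∑' i : ℕ, c i / 2 ^ i) = 1 / (β * 2 ^ b) ∧
  ∀ n : ℕ, (∑ i ∈ Finset.range n, c i) ≤ 1

/-- `α ∈ A(c,b)`: `α : ℕ → [0,1]` with `∑ αᵢ cᵢ / 2ⁱ = 1/(β·2^{b+1})`. -/
def memA (β : ℝ) (b : ℕ) (c α : ℕ → ℝ) : Prop :=
  (∀ i, α i ∈ Set.Icc (0 : ℝ) 1) ∧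
  (∑' i : ℕ, α i * c i / 2 ^ i) = 1 / (β * 2 ^ (b + 1))

/-- `P(c,α) = ∑ h(αᵢ)·cᵢ − h(∑ αᵢ·cᵢ)`. -/
noncomputable def Pfun (c α : ℕ → ℝ) : ℝ :=
  (∑' i : ℕ, binH (α i) * c i) - binH (∑' i : ℕ, α i * c i)

/-- `sup_{α ∈ A(c,b)} P(c,α)`. -/
noncomputable def supP (β : ℝ) (b : ℕ) (c : ℕ → ℝ) : ℝ :=
  sSup {y | ∃ α, memA β b c α ∧ y = Pfun c α}

/-- `G(β) = inf_{(c,b) ∈ C(β)} sup_{α ∈ A(c,b)} P(c,α)`. -/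
noncomputable def Gfun (β : ℝ) : ℝ :=
  sInf {y | ∃ c b, memC β c b ∧ y = supP β b c}

lemma binH_eq (p : ℝ) :
    binH p = (Real.negMulLog p + Real.negMulLog (1 - p)) / Real.log 2 := by
  simp only [binH, Real.logb, Real.negMulLog, one_div, Real.log_inv]
  ring

lemma continuous_binH : Continuous binH := by
  have : binH = fun p => (Real.negMulLog p + Real.negMulLog (1 - p)) / Real.log 2 :=
    funext binH_eq
  rw [this]
  exact (Real.continuous_negMulLog.add
    (Real.continuous_negMulLog.comp (continuous_const.sub continuous_id))).div_const _

/-- The supremum `sup_{α ∈ A(c,b)} P(c,α)` is attained. -/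
theorem supP_attained (β : ℝ) (hβ : β ∈ Set.Ico (1 : ℝ) 2)
    (c : ℕ → ℝ) (b : ℕ) (hC : memC β c b) :
    ∃ α : ℕ → ℝ, memA β b c α ∧ Pfun c α = supP β b c := by
  obtain ⟨hc01, hcsum, hcle⟩ := hC
  have hcpos : ∀ i, 0 ≤ c i := fun i => (hc01 i).1
  have hc1 : ∀ i, c i ≤ 1 := fun i => (hc01 i).2
  have hcsummable : Summable c := summable_of_sum_range_le hcpos hcle
  haveI : CompactSpace (Set.Icc (0 : ℝ) 1) := isCompact_iff_compactSpace.mp isCompact_Icc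
  -- continuity of the relevant functionals on X = (ℕ → Icc 0 1)
  have hcoord : ∀ i, Continuous (fun x : ℕ → Set.Icc (0 : ℝ) 1 => (x i : ℝ)) :=
    fun i => continuous_subtype_val.comp (continuous_apply i)
  have habs1 : ∀ (x : ℕ → Set.Icc (0 : ℝ) 1) (i : ℕ), |(x i : ℝ)| ≤ 1 := by
    intro x i
    exact abs_le.mpr ⟨by linarith [(x i).2.1], (x i).2.2⟩
  have hF : Continuous (fun x : ℕ → Set.Icc (0 : ℝ) 1 => ∑' i, (x i : ℝ) * c i / 2 ^ i) := by
    apply continuous_tsum (u := fun i => (1 / 2 : ℝ) ^ i)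
    · intro i; exact ((hcoord i).mul continuous_const).div_const _
    · exact summable_geometric_of_lt_one (by norm_num) (by norm_num)
    · intro i x
      have h2 : (0 : ℝ) < 2 ^ i := by positivity
      rw [Real.norm_eq_abs, abs_div, abs_mul, abs_of_nonneg (hcpos i),
        abs_of_nonneg h2.le, div_pow, one_pow]
      gcongr
      calc |(x i : ℝ)| * c i ≤ 1 * 1 :=
            mul_le_mul (habs1 x i) (hc1 i) (hcpos i) one_pos.le
        _ = 1 := one_mul 1
  have hG2 : Continuous (fun x : ℕ → Set.Icc (0 : ℝ) 1 => ∑' i, (x i : ℝ) * c i) := by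
    apply continuous_tsum (u := c)
    · intro i; exact (hcoord i).mul continuous_const
    · exact hcsummable
    · intro i x
      rw [Real.norm_eq_abs, abs_mul, abs_of_nonneg (hcpos i)]
      calc |(x i : ℝ)| * c i ≤ 1 * c i := by
            exact mul_le_mul_of_nonneg_right (habs1 x i) (hcpos i)
        _ = c i := one_mul _
  obtain ⟨M, hM⟩ := isCompact_Icc.exists_bound_of_continuousOn
    (f := binH) continuous_binH.continuousOn
  have hG1 : Continuous (fun x : ℕ → Set.Icc (0 : ℝ) 1 => ∑' i, binH (x i : ℝ) * c i) := by
    apply continuous_tsum (u := fun i => M * c i)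
    · intro i; exact (continuous_binH.comp (hcoord i)).mul continuous_const
    · exact hcsummable.mul_left M
    · intro i x
      rw [Real.norm_eq_abs, abs_mul, abs_of_nonneg (hcpos i)]
      exact mul_le_mul_of_nonneg_right (hM _ (x i).2) (hcpos i)
  set G : (ℕ → Set.Icc (0 : ℝ) 1) → ℝ :=
    fun x => (∑' i, binH (x i : ℝ) * c i) - binH (∑' i, (x i : ℝ) * c i) with hGdef
  have hGcont : Continuous G := hG1.sub (continuous_binH.comp hG2)
  -- the constraint set
  set K : Set (ℕ → Set.Icc (0 : ℝ) 1) :=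
    {x | ∑' i, (x i : ℝ) * c i / 2 ^ i = 1 / (β * 2 ^ (b + 1))} with hKdef
  have hKclosed : IsClosed K := isClosed_eq hF continuous_const
  have hKcompact : IsCompact K := hKclosed.isCompact
  have hβ0 : β ≠ 0 := by have := hβ.1; intro h; rw [h] at this; linarith
  have hKne : K.Nonempty := by
    refine ⟨fun _ => ⟨1 / 2, by norm_num⟩, ?_⟩
    show (∑' i, (1 / 2 : ℝ) * c i / 2 ^ i) = 1 / (β * 2 ^ (b + 1))
    simp only [mul_div_assoc]
    rw [tsum_mul_left, hcsum, pow_succ]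
    field_simp
  obtain ⟨x₀, hx₀K, hmax⟩ := hKcompact.exists_isMaxOn hKne hGcont.continuousOn
  set α₀ : ℕ → ℝ := fun i => (x₀ i : ℝ) with hα₀def
  have hα₀A : memA β b c α₀ := ⟨fun i => (x₀ i).2, hx₀K⟩
  have hPG : Pfun c α₀ = G x₀ := rfl
  -- upper bound property
  have hub : ∀ y ∈ {y | ∃ α, memA β b c α ∧ y = Pfun c α}, y ≤ Pfun c α₀ := by
    rintro y ⟨α, hαA, rfl⟩
    have hxK : (fun i => (⟨α i, hαA.1 i⟩ : Set.Icc (0 : ℝ) 1)) ∈ K := hαA.2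
    have : Pfun c α = G (fun i => (⟨α i, hαA.1 i⟩ : Set.Icc (0 : ℝ) 1)) := rfl
    rw [this, hPG]
    exact hmax hxK
  have hmem : Pfun c α₀ ∈ {y | ∃ α, memA β b c α ∧ y = Pfun c α} := ⟨α₀, hα₀A, rfl⟩
  refine ⟨α₀, hα₀A, le_antisymm (le_csSup ⟨Pfun c α₀, hub⟩ hmem) (csSup_le ⟨_, hmem⟩ hub)⟩
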